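/- Let Γ be a group generated by a finite set S. Suppose that every affine isometric action of Γ on a complex Hilbert space has a fixed point; i.e. for every complex Hilbert space H, every unitary representation ρ of Γ on H and every map η : Γ → H satisfying η(g g') = ρ(g)(η(g')) + η(g) for all g, g', there exists v ∈ H with ρ(g) v + η(g) = v for all g ∈ Γ. Then Γ has Kazhdan's property (T): for every complex Hilbert space H and every unitary representation ρ of Γ on H having no nonzero invariant vector, there exists ε > 0 such that every unit vector ξ ∈ H satisfies max_{s ∈ S} ‖ρ(s) ξ − ξ‖ ≥ ε. -/

import Mathlib

open scoped ENNReal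

section aux

variable {H : Type} [NormedAddCommGroup H] [InnerProductSpace ℂ H]

lemma memℓp_diag_map (e : ℕ → (H ≃ₗᵢ[ℂ] H)) (f : lp (fun _ : ℕ => H) 2) :
    Memℓp (fun n => e n (f n)) 2 := by
  apply memℓp_gen
  have := f.prop.summable (p := 2) (by norm_num)
  simpa using this

/-- Diagonal action of a family of isometries on `ℓ²(ℕ, H)`. -/
noncomputable def lpDiag (e : ℕ → (H ≃ₗᵢ[ℂ] H)) :
    lp (fun _ : ℕ => H) 2 ≃ₗᵢ[ℂ] lp (fun _ : ℕ => H) 2 where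
  toFun f := ⟨fun n => e n (f n), memℓp_diag_map e f⟩
  invFun f := ⟨fun n => (e n).symm (f n), memℓp_diag_map (fun n => (e n).symm) f⟩
  map_add' f g := by
    apply lp.ext
    funext n
    simp [lp.coeFn_add]; rfl
  map_smul' c f := by
    apply lp.ext
    funext n
    simp [lp.coeFn_smul]
  left_inv f := by
    apply lp.ext
    funext n
    simp
  right_inv f := by
    apply lp.ext
    funext n
    simp
  norm_map' f := by
    rw [lp.norm_eq_tsum_rpow (by norm_num) , lp.norm_eq_tsum_rpow (by norm_num) f]
    simp

@[simp] lemma lpDiag_apply (e : ℕ → (H ≃ₗᵢ[ℂ] H)) (f : lp (fun _ : ℕ => H) 2) (n : ℕ) :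
    (lpDiag e f) n = e n (f n) := rfl

end aux

/-- if every affine isometric action of a finitely generated group Γ
on a complex Hilbert space has a fixed point, then Γ has Kazhdan's property (T). -/
theorem fixed_point_property_implies_property_T
    (Γ : Type*) [Group Γ] (S : Finset Γ) (hS : Subgroup.closure (S : Set Γ) = ⊤)
    (hFH : ∀ (H : Type) [NormedAddCommGroup H] [InnerProductSpace ℂ H] [CompleteSpace H]
      (ρ : Γ →* (H ≃ₗᵢ[ℂ] H)) (η : Γ → H),
      (∀ g g' : Γ, η (g * g') = ρ g (η g') + η g) →
        ∃ v : H, ∀ g : Γ, ρ g v + η g = v) :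
    ∀ (H : Type) [NormedAddCommGroup H] [InnerProductSpace ℂ H] [CompleteSpace H]
      (ρ : Γ →* (H ≃ₗᵢ[ℂ] H)),
      (∀ ξ : H, (∀ g : Γ, ρ g ξ = ξ) → ξ = 0) →
      ∃ ε : ℝ, 0 < ε ∧ ∀ ξ : H, ‖ξ‖ = 1 → ∃ s ∈ S, ε ≤ ‖ρ s ξ - ξ‖ := by
  intro H _ _ _ ρ hinv
  by_contra hcon
  push_neg at hcon
  -- choose almost invariant unit vectors
  have hpos : ∀ n : ℕ, (0:ℝ) < (1/4)^n := fun n => by positivity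
  choose ξ hξ1 hξ2 using fun n : ℕ => hcon ((1/4)^n) (hpos n)
  -- uniform bound on orbit displacement
  have key : ∀ g : Γ, ∃ C : ℝ, 0 ≤ C ∧ ∀ n, ‖ρ g (ξ n) - ξ n‖ ≤ C * (1/4)^n := by
    intro g
    have hg : g ∈ Subgroup.closure (S : Set Γ) := hS ▸ Subgroup.mem_top g
    induction hg using Subgroup.closure_induction with
    | mem s hs =>
      exact ⟨1, zero_le_one, fun n => by
        simpa using (hξ2 n s hs).le⟩
    | one =>
      exact ⟨0, le_refl 0, fun n => by simp⟩
    | mul g h _ _ ihg ihh =>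
      obtain ⟨C1, hC1, h1⟩ := ihg
      obtain ⟨C2, hC2, h2⟩ := ihh
      refine ⟨C1 + C2, by linarith, fun n => ?_⟩
      have : ρ (g * h) (ξ n) - ξ n = ρ g (ρ h (ξ n) - ξ n) + (ρ g (ξ n) - ξ n) := by
        have hmm : ρ (g * h) (ξ n) = ρ g (ρ h (ξ n)) := by rw [map_mul]; rfl
        rw [hmm, map_sub]; abel
      calc ‖ρ (g * h) (ξ n) - ξ n‖
          ≤ ‖ρ g (ρ h (ξ n) - ξ n)‖ + ‖ρ g (ξ n) - ξ n‖ := by rw [this]; exact norm_add_le _ _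
        _ = ‖ρ h (ξ n) - ξ n‖ + ‖ρ g (ξ n) - ξ n‖ := by rw [(ρ g).norm_map]
        _ ≤ C2 * (1/4)^n + C1 * (1/4)^n := add_le_add (h2 n) (h1 n)
        _ = (C1 + C2) * (1/4)^n := by ring
    | inv g _ ihg =>
      obtain ⟨C, hC, h1⟩ := ihg
      refine ⟨C, hC, fun n => ?_⟩
      have : ‖ρ g⁻¹ (ξ n) - ξ n‖ = ‖ρ g (ξ n) - ξ n‖ := by
        rw [← (ρ g).norm_map (ρ g⁻¹ (ξ n) - ξ n)]
        have : ρ g (ρ g⁻¹ (ξ n)) = ξ n := by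
          have hmm : ρ g (ρ g⁻¹ (ξ n)) = (ρ g * ρ g⁻¹) (ξ n) := rfl
          rw [hmm, ← map_mul]; simp
        rw [map_sub, this, norm_sub_rev]
      rw [this]; exact h1 n
  choose C hC0 hC using key
  -- the ℓ² space and the diagonal representation
  set H' := lp (fun _ : ℕ => H) 2 with hH'
  let ρ' : Γ →* (H' ≃ₗᵢ[ℂ] H') :=
    { toFun := fun g => lpDiag (fun _ => ρ g)
      map_one' := by
        apply LinearIsometryEquiv.ext
        intro f
        apply lp.ext
        funext n
        show ρ 1 (f n) = f n
        rw [map_one]; rfl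
      map_mul' := by
        intro g h
        apply LinearIsometryEquiv.ext
        intro f
        apply lp.ext
        funext n
        show ρ (g * h) (f n) = ρ g (ρ h (f n))
        rw [map_mul]; rfl }
  -- the cocycle
  have hmem : ∀ g : Γ, Memℓp (fun n : ℕ => ((2:ℂ)^n) • (ρ g (ξ n) - ξ n)) 2 := by
    intro g
    apply memℓp_gen
    have h2 : ((2:ℝ≥0∞).toReal) = (2:ℝ) := by norm_num
    rw [h2]
    have hb : ∀ n : ℕ, ‖((2:ℂ)^n) • (ρ g (ξ n) - ξ n)‖ ^ (2:ℝ)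
        ≤ (C g)^2 * ((1/4:ℝ))^n := by
      intro n
      have hn : ‖((2:ℂ)^n) • (ρ g (ξ n) - ξ n)‖ = 2^n * ‖ρ g (ξ n) - ξ n‖ := by
        rw [norm_smul, norm_pow, RCLike.norm_ofNat]
      rw [Real.rpow_two, hn]
      have h1 : 2^n * ‖ρ g (ξ n) - ξ n‖ ≤ 2^n * (C g * (1/4)^n) := by
        have := hC g n
        have h2n : (0:ℝ) < 2^n := by positivity
        nlinarith
      have h3 : (2:ℝ)^n * (C g * (1/4)^n) = C g * (1/2)^n := by
        rw [show (1/2:ℝ) = 2 * (1/4) by norm_num, mul_pow]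
        ring
      have h4 : (0:ℝ) ≤ 2^n * ‖ρ g (ξ n) - ξ n‖ := by positivity
      calc (2^n * ‖ρ g (ξ n) - ξ n‖)^2 ≤ (C g * (1/2)^n)^2 := by
              apply pow_le_pow_left₀ h4; rw [← h3]; exact h1
        _ = (C g)^2 * ((1/4:ℝ))^n := by
              have hq : ((1/2:ℝ)^n)^2 = (1/4)^n := by
                rw [← pow_mul, mul_comm, pow_mul]; norm_num
              rw [mul_pow, hq]
    apply Summable.of_nonneg_of_le (fun n => by positivity) hb
    exact ((summable_geometric_of_lt_one (by norm_num) (by norm_num)).mul_left _)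
  let η : Γ → H' := fun g => ⟨fun n => ((2:ℂ)^n) • (ρ g (ξ n) - ξ n), hmem g⟩
  have hcocycle : ∀ g g' : Γ, η (g * g') = ρ' g (η g') + η g := by
    intro g g'
    apply lp.ext
    funext n
    show ((2:ℂ)^n) • (ρ (g * g') (ξ n) - ξ n)
      = ρ g (((2:ℂ)^n) • (ρ g' (ξ n) - ξ n)) + ((2:ℂ)^n) • (ρ g (ξ n) - ξ n)
    rw [map_smul, map_sub, ← smul_add]
    congr 1
    have : ρ (g * g') (ξ n) = ρ g (ρ g' (ξ n)) := by
      rw [map_mul, LinearIsometryEquiv.coe_mul]; rfl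
    rw [this]; abel
  obtain ⟨v, hv⟩ := hFH H' ρ' η hcocycle
  -- each coordinate of v is forced
  have hcoord : ∀ n : ℕ, v n = -(((2:ℂ)^n) • ξ n) := by
    intro n
    have hw : ∀ g : Γ, ρ g (v n + ((2:ℂ)^n) • ξ n) = v n + ((2:ℂ)^n) • ξ n := by
      intro g
      have := congrFun (congrArg (fun x : H' => (x : ∀ _ : ℕ, H)) (hv g)) n
      simp only [lp.coeFn_add, Pi.add_apply] at this
      have heq : ρ g (v n) + ((2:ℂ)^n) • (ρ g (ξ n) - ξ n) = v n := this
      rw [map_add, map_smul]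
      have : ((2:ℂ)^n) • ρ g (ξ n) = ((2:ℂ)^n) • (ρ g (ξ n) - ξ n) + ((2:ℂ)^n) • ξ n := by
        rw [← smul_add]; congr 1; abel
      rw [this, ← add_assoc, heq]
    have h0 : v n + ((2:ℂ)^n) • ξ n = 0 := hinv _ hw
    exact eq_neg_of_add_eq_zero_left h0
  have hnorm : ∀ n : ℕ, (2:ℝ)^n ≤ ‖v‖ := by
    intro n
    have h1 : ‖v n‖ = 2^n := by
      rw [hcoord n, norm_neg, norm_smul, hξ1 n, norm_pow, RCLike.norm_ofNat]
      ring
    have h2 := lp.norm_apply_le_norm (E := fun _ : ℕ => H) (p := 2) (by norm_num) v n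
    rw [h1] at h2; exact h2
  obtain ⟨n, hn⟩ := pow_unbounded_of_one_lt ‖v‖ (by norm_num : (1:ℝ) < 2)
  exact absurd (hnorm n) (not_le.mpr hn)
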